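/- Let n ≥ 1 and μ > 0. Let f : ℝⁿ → ℝ be Lipschitz continuous with constant L₁ and differentiable with gradient Lipschitz continuous with constant L₂ (Assumptions 1 and 2), let f_μ(a) = E_{v∼U_b}[f(a + μ·v)] be its ball-smoothing, and let a* minimize f over the box [0,1]ⁿ. On a probability space with a filtration (ℱ_t)_{t≥0}, let a_0 ∈ [0,1]ⁿ be ℱ_0-measurable, and for t = 0,…,T−1 let ĝ_t be a square-integrable random vector in ℝⁿ with E[ĝ_t | ℱ_t] = ∇f_μ(a_t) almost surely, and set a_{t+1} = P_[0,1](a_t − η_t·ĝ_t) (coordinatewise clamping to [0,1]), where each step size satisfies η_t ∈ (0, 1/L₂) and a_t is ℱ_t-measurable. Define the rectified gradient G_t = (a_t − a_{t+1})/η_t. Then ∑_{t=0}^{T−1} (2η_t − L₂·η_t²)·E[‖G_t‖²] ≤ 2·∑_{t=0}^{T−1} η_t·E[‖ĝ_t − ∇f_μ(a_t)‖²] + 2μ²·L₂ + 2(f(a_0) − f(a*)). (Lemma 3.) -/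

import Mathlib

open MeasureTheory

/-- The uniform probability measure on the closed unit Euclidean ball in `ℝⁿ`:
Lebesgue measure restricted to the ball, normalized to total mass one. -/
noncomputable def ballUniform (n : ℕ) : Measure (EuclideanSpace ℝ (Fin n)) :=
  (volume (Metric.closedBall (0 : EuclideanSpace ℝ (Fin n)) 1))⁻¹ •
    volume.restrict (Metric.closedBall (0 : EuclideanSpace ℝ (Fin n)) 1)

/-- Coordinatewise projection of `ℝⁿ` onto the box `[0,1]ⁿ`. -/
def clamp01 (n : ℕ) (x : EuclideanSpace ℝ (Fin n)) : EuclideanSpace ℝ (Fin n) :=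
  WithLp.toLp 2 (fun i => min 1 (max 0 (x i)))


local notation "⟪" x ", " y "⟫" => @inner ℝ _ _ x y

section Descent
variable {F : Type*} [NormedAddCommGroup F] [InnerProductSpace ℝ F] [CompleteSpace F]

lemma inner_gradient_eq (f : F → ℝ) (x v : F) :
    ⟪gradient f x, v⟫ = fderiv ℝ f x v := by
  simp [gradient, InnerProductSpace.toDual_symm_apply]

lemma fderiv_sub_norm_eq (f : F → ℝ) (x y : F) :
    ‖fderiv ℝ f x - fderiv ℝ f y‖ = ‖gradient f x - gradient f y‖ := by
  rw [gradient, gradient, ← LinearIsometryEquiv.map_sub, LinearIsometryEquiv.norm_map]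

/-- Quadratic upper bound (descent lemma) for a function with Lipschitz gradient. -/
lemma descent_abs {f : F → ℝ} {L : NNReal} (hdiff : Differentiable ℝ f)
    (hgrad : LipschitzWith L (gradient f)) (x y : F) :
    |f y - f x - ⟪gradient f x, y - x⟫| ≤ (L : ℝ) / 2 * ‖y - x‖ ^ 2 := by
  set d := y - x with hd
  have hcontg : Continuous (gradient f) := hgrad.continuous
  have hφcont : Continuous fun t : ℝ => ⟪gradient f (x + t • d), d⟫ := by
    exact (hcontg.comp (by continuity)).inner continuous_const
  have hderiv : ∀ t ∈ Set.uIcc (0:ℝ) 1,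
      HasDerivAt (fun t : ℝ => f (x + t • d)) ⟪gradient f (x + t • d), d⟫ t := by
    intro t _
    have h1 : HasDerivAt (fun t : ℝ => x + t • d) d t := by
      simpa using ((hasDerivAt_id t).smul_const d).const_add x
    have h2 := ((hdiff (x + t • d)).hasFDerivAt).comp_hasDerivAt t h1
    rw [inner_gradient_eq]; exact h2
  have hint : IntervalIntegrable (fun t : ℝ => ⟪gradient f (x + t • d), d⟫)
      volume 0 1 := hφcont.intervalIntegrable 0 1
  have key : f y - f x = ∫ t in (0:ℝ)..1, ⟪gradient f (x + t • d), d⟫ := by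
    rw [intervalIntegral.integral_eq_sub_of_hasDerivAt hderiv hint]
    simp [hd]
  have hconst : ⟪gradient f x, d⟫ = ∫ t in (0:ℝ)..1, ⟪gradient f x, d⟫ := by simp
  rw [key, hconst, ← intervalIntegral.integral_sub hint (by simp)]
  have hbound : ∀ t ∈ Set.uIcc (0:ℝ) 1,
      ‖⟪gradient f (x + t • d), d⟫ - ⟪gradient f x, d⟫‖ ≤ (L : ℝ) * ‖d‖ ^ 2 * t := by
    intro t ht
    rw [Set.uIcc_of_le (by norm_num)] at ht
    have : ⟪gradient f (x + t • d), d⟫ - ⟪gradient f x, d⟫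
        = ⟪gradient f (x + t • d) - gradient f x, d⟫ := by
      rw [inner_sub_left]
    rw [this]
    calc ‖⟪gradient f (x + t • d) - gradient f x, d⟫‖
        ≤ ‖gradient f (x + t • d) - gradient f x‖ * ‖d‖ := norm_inner_le_norm _ _
      _ ≤ ((L : ℝ) * ‖t • d‖) * ‖d‖ := by
          gcongr
          simpa [dist_eq_norm] using hgrad.dist_le_mul (x + t • d) x
      _ = (L : ℝ) * ‖d‖ ^ 2 * t := by
          rw [norm_smul, Real.norm_eq_abs, abs_of_nonneg ht.1]; ring
  have hval : (∫ t in (0:ℝ)..1, (L : ℝ) * ‖d‖ ^ 2 * t) = (L : ℝ) / 2 * ‖d‖ ^ 2 := by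
    rw [intervalIntegral.integral_const_mul, integral_id]; ring
  calc |∫ t in (0:ℝ)..1, (⟪gradient f (x + t • d), d⟫ - ⟪gradient f x, d⟫)|
      ≤ |∫ t in (0:ℝ)..1, (L : ℝ) * ‖d‖ ^ 2 * t| := by
        rw [← Real.norm_eq_abs, ← Real.norm_eq_abs (∫ t in (0:ℝ)..1, (L : ℝ) * ‖d‖ ^ 2 * t)]
        rw [Real.norm_eq_abs (∫ t in (0:ℝ)..1, (L : ℝ) * ‖d‖ ^ 2 * t)]
        apply intervalIntegral.norm_integral_le_abs_of_norm_le
          ((ae_restrict_iff' measurableSet_uIoc).2 ?_)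
          (by apply Continuous.intervalIntegrable; continuity)
        filter_upwards with t ht
        refine hbound t ?_
        rw [Set.uIcc_of_le (by norm_num)]
        rw [Set.uIoc_of_le (by norm_num)] at ht
        exact ⟨le_of_lt ht.1, ht.2⟩
    _ = (L : ℝ) / 2 * ‖d‖ ^ 2 := by
        rw [hval, abs_of_nonneg (by positivity)]
end Descent

section Clamp
variable {n : ℕ}

lemma clamp01_mem (x : EuclideanSpace ℝ (Fin n)) (i : Fin n) :
    clamp01 n x i ∈ Set.Icc (0:ℝ) 1 := by
  show min 1 (max 0 (x i)) ∈ Set.Icc (0:ℝ) 1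
  exact ⟨le_min (by norm_num) (le_max_left _ _), min_le_left _ _⟩

lemma clamp01_eq_self {x : EuclideanSpace ℝ (Fin n)} (hx : ∀ i, x i ∈ Set.Icc (0:ℝ) 1) :
    clamp01 n x = x := by
  ext i
  simp [clamp01, max_eq_right (hx i).1, min_eq_right (hx i).2]

lemma real_clamp_lip (a b : ℝ) : |min 1 (max 0 a) - min 1 (max 0 b)| ≤ |a - b| := by
  have h1 : |min 1 (max 0 a) - min 1 (max 0 b)| ≤ max |max 0 a - max 0 b| |(1:ℝ) - 1| := by
    simpa [min_comm] using abs_min_sub_min_le_max (max 0 a) (1:ℝ) (max 0 b) 1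
  have h2 : |max 0 a - max 0 b| ≤ |a - b| := by
    simpa [max_comm] using abs_max_sub_max_le_abs a b 0
  simp only [sub_self, abs_zero] at h1
  exact h1.trans (by simpa using h2)

lemma clamp01_nonexpansive (x y : EuclideanSpace ℝ (Fin n)) :
    ‖clamp01 n x - clamp01 n y‖ ≤ ‖x - y‖ := by
  rw [EuclideanSpace.norm_eq, EuclideanSpace.norm_eq]
  apply Real.sqrt_le_sqrt
  apply Finset.sum_le_sum
  intro i _
  simp only [Real.norm_eq_abs, PiLp.sub_apply]
  have h := real_clamp_lip (x i) (y i)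
  simp only [clamp01, WithLp.ofLp_toLp]
  have h0 : (0:ℝ) ≤ |min 1 (max 0 (x i)) - min 1 (max 0 (y i))| := abs_nonneg _
  nlinarith [sq_abs (min 1 (max 0 (x i)) - min 1 (max 0 (y i))), sq_abs (x i - y i)]

lemma clamp01_obtuse (x z : EuclideanSpace ℝ (Fin n)) (hz : ∀ i, z i ∈ Set.Icc (0:ℝ) 1) :
    ⟪x - clamp01 n x, z - clamp01 n x⟫ ≤ 0 := by
  rw [PiLp.inner_apply]
  apply Finset.sum_nonpos
  intro i _
  have hc := clamp01_mem x i
  simp only [PiLp.sub_apply, RCLike.inner_apply, conj_trivial]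
  rcases lt_or_ge (x i) 0 with h0 | h0
  · have : clamp01 n x i = 0 := by simp [clamp01, max_eq_left h0.le]
    rw [this]
    have := (hz i).1
    nlinarith
  · rcases le_or_gt (x i) 1 with h1 | h1
    · have : clamp01 n x i = x i := by simp [clamp01, max_eq_right h0, min_eq_right h1]
      rw [this]; simp
    · have : clamp01 n x i = 1 := by
        simp [clamp01, max_eq_right h0, min_eq_left h1.le]
      rw [this]
      have := (hz i).2
      nlinarith
end Clamp

section Ball
variable {n : ℕ}

lemma ballUniform_isProb (hn : 1 ≤ n) : IsProbabilityMeasure (ballUniform n) := by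
  haveI : Nonempty (Fin n) := ⟨⟨0, hn⟩⟩
  have hpos : 0 < volume (Metric.closedBall (0 : EuclideanSpace ℝ (Fin n)) 1) :=
    Metric.measure_closedBall_pos _ _ one_pos
  have hfin : volume (Metric.closedBall (0 : EuclideanSpace ℝ (Fin n)) 1) < ⊤ :=
    measure_closedBall_lt_top
  constructor
  rw [ballUniform, Measure.smul_apply, Measure.restrict_apply MeasurableSet.univ,
    Set.univ_inter, smul_eq_mul]
  exact ENNReal.inv_mul_cancel hpos.ne' hfin.ne

lemma ballUniform_ae_norm_le (n : ℕ) : ∀ᵐ v ∂(ballUniform n), ‖v‖ ≤ 1 := by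
  rw [ballUniform]
  refine Measure.ae_smul_measure ?_ _
  filter_upwards [ae_restrict_mem measurableSet_closedBall] with v hv
  simpa using hv

lemma ballUniform_integral_id (n : ℕ) :
    (∫ v, v ∂(ballUniform n)) = (0 : EuclideanSpace ℝ (Fin n)) := by
  set B := Metric.closedBall (0 : EuclideanSpace ℝ (Fin n)) 1 with hB
  have hBmeas : MeasurableSet B := measurableSet_closedBall
  have hsym : ∀ v : EuclideanSpace ℝ (Fin n), -v ∈ B ↔ v ∈ B := by
    intro v; simp [hB]
  have key : (∫ v in B, v ∂(volume : Measure (EuclideanSpace ℝ (Fin n))))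
      = (0 : EuclideanSpace ℝ (Fin n)) := by
    set g : EuclideanSpace ℝ (Fin n) → EuclideanSpace ℝ (Fin n) := B.indicator id with hg
    have hodd : ∀ v, g (-v) = - g v := by
      intro v
      by_cases hv : v ∈ B
      · simp [hg, Set.indicator_of_mem, hv, (hsym v).2 hv]
      · have : ¬ (-v ∈ B) := fun h => hv ((hsym v).1 h)
        simp [hg, Set.indicator_of_notMem, hv, this]
    have h1 : (∫ v, g v ∂(volume : Measure (EuclideanSpace ℝ (Fin n))))
        = ∫ v, g (-v) ∂(volume : Measure (EuclideanSpace ℝ (Fin n))) :=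
      (integral_neg_eq_self g volume).symm
    have h2 : (∫ v, g (-v) ∂(volume : Measure (EuclideanSpace ℝ (Fin n))))
        = - ∫ v, g v ∂(volume : Measure (EuclideanSpace ℝ (Fin n))) := by
      simp_rw [hodd]
      exact integral_neg g
    have h3 : (∫ v, g v ∂(volume : Measure (EuclideanSpace ℝ (Fin n))))
        = 0 := by
      have := h1.trans h2
      have h4 : (2:ℝ) • (∫ v, g v ∂(volume : Measure (EuclideanSpace ℝ (Fin n)))) = 0 := by
        rw [two_smul]
        nth_rewrite 1 [this]
        simp
      simpa using (smul_eq_zero.mp h4).resolve_left (by norm_num)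
    rw [← integral_indicator hBmeas]
    exact h3
  rw [ballUniform, integral_smul_measure]
  simp [key]
  exact Or.inr key
end Ball

section Smoothing
variable {n : ℕ} {f : EuclideanSpace ℝ (Fin n) → ℝ} {L₁ L₂ : NNReal} {μ : ℝ}

lemma gradient_norm_le_of_lipschitz {F : Type*} [NormedAddCommGroup F]
    [InnerProductSpace ℝ F] [CompleteSpace F] {f : F → ℝ} {L : NNReal}
    (hf : LipschitzWith L f) (x : F) : ‖gradient f x‖ ≤ L := by
  rw [gradient, LinearIsometryEquiv.norm_map]
  exact norm_fderiv_le_of_lipschitz ℝ hf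

lemma smoothing_hasGradient (hn : 1 ≤ n)
    (hf : LipschitzWith L₁ f) (hdiff : Differentiable ℝ f)
    (hgrad : LipschitzWith L₂ (gradient f)) (hμ : 0 < μ)
    (x₀ : EuclideanSpace ℝ (Fin n)) :
    HasGradientAt (fun x => ∫ v, f (x + μ • v) ∂(ballUniform n))
      (∫ v, gradient f (x₀ + μ • v) ∂(ballUniform n)) x₀ := by
  haveI := ballUniform_isProb hn
  have hgc : Continuous (gradient f) := hgrad.continuous
  have hfd : Continuous fun z => fderiv ℝ f z := by
    have : (fun z => fderiv ℝ f z)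
        = fun z => (InnerProductSpace.toDual ℝ _) (gradient f z) := by
      funext z
      simp [gradient]
    rw [this]
    exact (InnerProductSpace.toDual ℝ _).continuous.comp hgc
  have hF : HasFDerivAt (fun x => ∫ v, f (x + μ • v) ∂(ballUniform n))
      (∫ v, fderiv ℝ f (x₀ + μ • v) ∂(ballUniform n)) x₀ := by
    apply hasFDerivAt_integral_of_dominated_of_fderiv_le
      (F' := fun x v => fderiv ℝ f (x + μ • v)) (bound := fun _ => (L₁ : ℝ))
      (s := Metric.ball x₀ 1) (Metric.ball_mem_nhds x₀ one_pos)
    · filter_upwards with x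
      exact (hf.continuous.comp (continuous_const.add (continuous_const_smul μ))).aestronglyMeasurable
    · apply Integrable.mono' (integrable_const (|f x₀| + (L₁ : ℝ) * μ))
      · exact (hf.continuous.comp (continuous_const.add (continuous_const_smul μ))).aestronglyMeasurable
      · filter_upwards [ballUniform_ae_norm_le n] with v hv
        have := hf.dist_le_mul (x₀ + μ • v) x₀
        rw [dist_eq_norm] at this
        simp only [add_sub_cancel_left, dist_eq_norm] at this
        have h2 : ‖μ • v‖ ≤ μ := by
          rw [norm_smul, Real.norm_eq_abs, abs_of_pos hμ]
          nlinarith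
        have := abs_sub_abs_le_abs_sub (f (x₀ + μ • v)) (f x₀)
        rw [Real.norm_eq_abs]
        have hd := hf.dist_le_mul (x₀ + μ • v) x₀
        rw [Real.dist_eq, dist_eq_norm, add_sub_cancel_left] at hd
        nlinarith [abs_nonneg (f (x₀ + μ • v) - f x₀), NNReal.coe_nonneg L₁]
    · exact (hfd.comp (continuous_const.add (continuous_const_smul μ))).aestronglyMeasurable
    · filter_upwards with v x _
      exact norm_fderiv_le_of_lipschitz ℝ hf
    · exact integrable_const _
    · filter_upwards with v x _
      have h1 : HasFDerivAt (fun y : EuclideanSpace ℝ (Fin n) => y + μ • v)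
          (ContinuousLinearMap.id ℝ _) x := (hasFDerivAt_id x).add_const (μ • v)
      have h2 := ((hdiff (x + μ • v)).hasFDerivAt).comp x h1
      exact h2
  have hGr := hasFDerivAt_iff_hasGradientAt.mp hF
  have h2 := (InnerProductSpace.toDual ℝ
      (EuclideanSpace ℝ (Fin n))).toLinearIsometry.integral_comp_comm
      (fun v => gradient f (x₀ + μ • v)) (μ := ballUniform n)
  simp only [LinearIsometryEquiv.coe_toLinearIsometry] at h2
  have hint0 : (∫ v, fderiv ℝ f (x₀ + μ • v) ∂(ballUniform n))
      = (InnerProductSpace.toDual ℝ (EuclideanSpace ℝ (Fin n)))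
        (∫ v, gradient f (x₀ + μ • v) ∂(ballUniform n)) := by
    rw [← h2]
    congr 1
    funext v
    simp [gradient]
  rw [hint0, LinearIsometryEquiv.symm_apply_apply] at hGr
  exact hGr

lemma smoothing_integrable (hn : 1 ≤ n) (hf : LipschitzWith L₁ f) (hμ : 0 < μ)
    (x : EuclideanSpace ℝ (Fin n)) :
    Integrable (fun v => f (x + μ • v)) (ballUniform n) := by
  haveI := ballUniform_isProb hn
  apply Integrable.mono' (integrable_const (|f x| + (L₁ : ℝ) * μ))
  · exact (hf.continuous.comp (continuous_const.add (continuous_const_smul μ))).aestronglyMeasurable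
  · filter_upwards [ballUniform_ae_norm_le n] with v hv
    have hd := hf.dist_le_mul (x + μ • v) x
    rw [Real.dist_eq, dist_eq_norm, add_sub_cancel_left] at hd
    have h2 : ‖μ • v‖ ≤ μ := by
      rw [norm_smul, Real.norm_eq_abs, abs_of_pos hμ]
      nlinarith
    rw [Real.norm_eq_abs]
    have := abs_sub_abs_le_abs_sub (f (x + μ • v)) (f x)
    nlinarith [NNReal.coe_nonneg L₁]

lemma smoothing_grad_integrable (hn : 1 ≤ n) (hf : LipschitzWith L₁ f)
    (hgrad : LipschitzWith L₂ (gradient f)) (hμ : 0 < μ)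
    (x : EuclideanSpace ℝ (Fin n)) :
    Integrable (fun v => gradient f (x + μ • v)) (ballUniform n) := by
  haveI := ballUniform_isProb hn
  apply Integrable.mono' (integrable_const (L₁ : ℝ))
  · exact (hgrad.continuous.comp
      (continuous_const.add (continuous_const_smul μ))).aestronglyMeasurable
  · filter_upwards with v
    exact gradient_norm_le_of_lipschitz hf _

lemma smoothing_lip (hn : 1 ≤ n) (hf : LipschitzWith L₁ f) (hμ : 0 < μ) :
    LipschitzWith L₁ (fun x => ∫ v, f (x + μ • v) ∂(ballUniform n)) := by
  haveI := ballUniform_isProb hn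
  apply LipschitzWith.of_dist_le_mul
  intro x y
  rw [Real.dist_eq, ← integral_sub (smoothing_integrable hn hf hμ x)
    (smoothing_integrable hn hf hμ y)]
  calc |∫ v, (f (x + μ • v) - f (y + μ • v)) ∂(ballUniform n)|
      ≤ ∫ v, |f (x + μ • v) - f (y + μ • v)| ∂(ballUniform n) := by
        simpa [Real.norm_eq_abs] using norm_integral_le_integral_norm
          (μ := ballUniform n) (fun v => f (x + μ • v) - f (y + μ • v))
    _ ≤ ∫ _v, (L₁ : ℝ) * dist x y ∂(ballUniform n) := by
        apply integral_mono_of_nonneg (by filter_upwards with v; positivity) (integrable_const _)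
        filter_upwards with v
        have := hf.dist_le_mul (x + μ • v) (y + μ • v)
        simpa [Real.dist_eq, dist_eq_norm, add_sub_add_comm] using this
    _ = (L₁ : ℝ) * dist x y := by
        simp
lemma smoothing_grad_lip (hn : 1 ≤ n)
    (hf : LipschitzWith L₁ f) (hdiff : Differentiable ℝ f)
    (hgrad : LipschitzWith L₂ (gradient f)) (hμ : 0 < μ) :
    LipschitzWith L₂ (gradient (fun x => ∫ v, f (x + μ • v) ∂(ballUniform n))) := by
  haveI := ballUniform_isProb hn
  apply LipschitzWith.of_dist_le_mul
  intro x y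
  rw [(smoothing_hasGradient hn hf hdiff hgrad hμ x).gradient,
    (smoothing_hasGradient hn hf hdiff hgrad hμ y).gradient]
  rw [dist_eq_norm, ← integral_sub (smoothing_grad_integrable hn hf hgrad hμ x)
    (smoothing_grad_integrable hn hf hgrad hμ y)]
  calc ‖∫ v, (gradient f (x + μ • v) - gradient f (y + μ • v)) ∂(ballUniform n)‖
      ≤ ∫ v, ‖gradient f (x + μ • v) - gradient f (y + μ • v)‖ ∂(ballUniform n) :=
        norm_integral_le_integral_norm _
    _ ≤ ∫ _v, (L₂ : ℝ) * dist x y ∂(ballUniform n) := by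
        apply integral_mono_of_nonneg (by filter_upwards with v; positivity) (integrable_const _)
        filter_upwards with v
        have := hgrad.dist_le_mul (x + μ • v) (y + μ • v)
        simpa [dist_eq_norm, add_sub_add_comm] using this
    _ = (L₂ : ℝ) * dist x y := by simp

lemma smoothing_bias (hn : 1 ≤ n)
    (hf : LipschitzWith L₁ f) (hdiff : Differentiable ℝ f)
    (hgrad : LipschitzWith L₂ (gradient f)) (hμ : 0 < μ)
    (x : EuclideanSpace ℝ (Fin n)) :
    |(∫ v, f (x + μ • v) ∂(ballUniform n)) - f x| ≤ (L₂ : ℝ) / 2 * μ ^ 2 := by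
  haveI := ballUniform_isProb hn
  have hid : Integrable (fun v : EuclideanSpace ℝ (Fin n) => v) (ballUniform n) := by
    apply Integrable.mono' (integrable_const (1 : ℝ)) aestronglyMeasurable_id
    exact ballUniform_ae_norm_le n
  have hsm : Integrable (fun v : EuclideanSpace ℝ (Fin n) => μ • v) (ballUniform n) := by
    exact hid.smul μ
  have hinner : Integrable (fun v : EuclideanSpace ℝ (Fin n) =>
      ⟪gradient f x, μ • v⟫) (ballUniform n) := hsm.const_inner _
  have hzero : (∫ v, ⟪gradient f x, μ • v⟫ ∂(ballUniform n)) = 0 := by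
    rw [integral_inner hsm]
    have : (∫ v, μ • (v : EuclideanSpace ℝ (Fin n)) ∂(ballUniform n))
        = μ • ∫ v, (v : EuclideanSpace ℝ (Fin n)) ∂(ballUniform n) := integral_smul μ _
    rw [this, ballUniform_integral_id]
    simp
  have hi1 : Integrable (fun v : EuclideanSpace ℝ (Fin n) =>
      f (x + μ • v) - f x) (ballUniform n) :=
    (smoothing_integrable hn hf hμ x).sub (integrable_const _)
  have hsplit : (∫ v, f (x + μ • v) ∂(ballUniform n)) - f x
      = ∫ v, (f (x + μ • v) - f x - ⟪gradient f x, μ • v⟫) ∂(ballUniform n) := by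
    rw [integral_sub hi1 hinner, integral_sub (smoothing_integrable hn hf hμ x)
      (integrable_const _), hzero, integral_const]
    simp
  rw [hsplit]
  calc |∫ v, (f (x + μ • v) - f x - ⟪gradient f x, μ • v⟫) ∂(ballUniform n)|
      ≤ ∫ v, |f (x + μ • v) - f x - ⟪gradient f x, μ • v⟫| ∂(ballUniform n) := by
        simpa [Real.norm_eq_abs] using norm_integral_le_integral_norm
          (μ := ballUniform n) (fun v => f (x + μ • v) - f x - ⟪gradient f x, μ • v⟫)
    _ ≤ ∫ _v, (L₂ : ℝ) / 2 * μ ^ 2 ∂(ballUniform n) := by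
        apply integral_mono_of_nonneg (by filter_upwards with v; positivity)
          (integrable_const _)
        filter_upwards [ballUniform_ae_norm_le n] with v hv
        have hd := descent_abs hdiff hgrad x (x + μ • v)
        simp only [add_sub_cancel_left] at hd
        have h2 : ‖μ • v‖ ^ 2 ≤ μ ^ 2 := by
          rw [norm_smul, Real.norm_eq_abs, abs_of_pos hμ]
          have h3 : ‖v‖ ^ 2 ≤ 1 := by nlinarith [norm_nonneg v]
          nlinarith [mul_nonneg (sq_nonneg μ) (by linarith : (0:ℝ) ≤ 1 - ‖v‖ ^ 2)]
        calc |f (x + μ • v) - f x - ⟪gradient f x, μ • v⟫| ≤ (L₂:ℝ)/2 * ‖μ • v‖ ^ 2 := hd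
          _ ≤ (L₂:ℝ)/2 * μ ^ 2 := by
              have : (0:ℝ) ≤ (L₂:ℝ)/2 := by positivity
              nlinarith
    _ = (L₂ : ℝ) / 2 * μ ^ 2 := by simp
end Smoothing

section Condexp
variable {Ω : Type*} {m mΩ : MeasurableSpace Ω} {ℙ : Measure Ω}

lemma condexp_clm_comm [IsFiniteMeasure ℙ] (hm : m ≤ mΩ)
    {E F : Type*} [NormedAddCommGroup E] [NormedSpace ℝ E] [CompleteSpace E]
    [NormedAddCommGroup F] [NormedSpace ℝ F] [CompleteSpace F]
    (L : E →L[ℝ] F) {X : Ω → E} (hX : Integrable X ℙ) :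
    (ℙ[fun ω => L (X ω)|m]) =ᵐ[ℙ] fun ω => L ((ℙ[X|m]) ω) := by
  symm
  apply ae_eq_condExp_of_forall_setIntegral_eq hm (L.integrable_comp hX)
  · intro s _ _
    exact (L.integrable_comp integrable_condExp).integrableOn
  · intro s hs hμs
    rw [L.integral_comp_comm integrable_condExp.integrableOn,
      setIntegral_condExp hm hX hs, ← L.integral_comp_comm hX.integrableOn]
  · exact (L.continuous.comp_stronglyMeasurable
      stronglyMeasurable_condExp).aestronglyMeasurable
end Condexp

lemma euclidean_abs_coord_le_norm {n : ℕ} (x : EuclideanSpace ℝ (Fin n)) (i : Fin n) :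
    |x i| ≤ ‖x‖ := by
  rw [EuclideanSpace.norm_eq, ← Real.sqrt_sq (abs_nonneg (x i))]
  apply Real.sqrt_le_sqrt
  rw [sq_abs]
  have : x i ^ 2 = ‖x i‖ ^ 2 := by rw [Real.norm_eq_abs, sq_abs]
  rw [this]
  exact Finset.single_le_sum (f := fun j => ‖x j‖ ^ 2) (fun j _ => by positivity)
    (Finset.mem_univ i)

lemma box_norm_le {n : ℕ} {x : EuclideanSpace ℝ (Fin n)}
    (hx : ∀ i, x i ∈ Set.Icc (0:ℝ) 1) : ‖x‖ ≤ Real.sqrt n := by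
  rw [EuclideanSpace.norm_eq]
  apply Real.sqrt_le_sqrt
  calc ∑ i, ‖x i‖ ^ 2 ≤ ∑ _i : Fin n, (1:ℝ) := by
        apply Finset.sum_le_sum
        intro i _
        rw [Real.norm_eq_abs]
        have h1 := (hx i).1
        have h2 := (hx i).2
        nlinarith [abs_of_nonneg h1]
    _ = n := by simp

lemma clamp01_lipschitz {n : ℕ} : LipschitzWith 1 (clamp01 n) := by
  apply LipschitzWith.of_dist_le_mul
  intro x y
  rw [dist_eq_norm, dist_eq_norm]
  simpa using clamp01_nonexpansive x y

lemma pointwise_step {n : ℕ} (fμ : EuclideanSpace ℝ (Fin n) → ℝ) (L₂ : NNReal)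
    (hdescent : ∀ x y, fμ y ≤ fμ x + ⟪gradient fμ x, y - x⟫ + (L₂ : ℝ) / 2 * ‖y - x‖ ^ 2)
    (η : ℝ) (hη : 0 < η) (A g : EuclideanSpace ℝ (Fin n))
    (hbA : ∀ i, A i ∈ Set.Icc (0:ℝ) 1) :
    (η - (L₂ : ℝ) * η ^ 2 / 2) * ‖η⁻¹ • (A - clamp01 n (A - η • g))‖ ^ 2
      ≤ fμ A - fμ (clamp01 n (A - η • g))
        + η * ⟪g - gradient fμ A, η⁻¹ • (A - clamp01 n (A - η • gradient fμ A))⟫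
        + η * ‖g - gradient fμ A‖ ^ 2 := by
  set d := gradient fμ A with hd
  set A' := clamp01 n (A - η • g) with hA'
  set B' := clamp01 n (A - η • d) with hB'
  set u := A - A' with hu
  set w := A - B' with hw
  have h1 : ‖u‖ ^ 2 ≤ η * ⟪g, u⟫ := by
    have hobt := clamp01_obtuse (A - η • g) A hbA
    rw [← hA'] at hobt
    have e : A - η • g - A' = u - η • g := by rw [hu]; abel
    rw [← hu, e, inner_sub_left, real_inner_smul_left, real_inner_self_eq_norm_sq] at hobt
    linarith
  have h2 : fμ A' ≤ fμ A - ⟪d, u⟫ + (L₂ : ℝ) / 2 * ‖u‖ ^ 2 := by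
    have hdes := hdescent A A'
    have e1 : A' - A = -u := by rw [hu]; abel
    rw [e1, inner_neg_right, norm_neg] at hdes
    linarith
  have h3 : ‖u - w‖ ≤ η * ‖g - d‖ := by
    have hne := clamp01_nonexpansive (A - η • d) (A - η • g)
    rw [← hA', ← hB'] at hne
    have e1 : (A - η • d) - (A - η • g) = η • (g - d) := by rw [smul_sub]; abel
    have e2 : u - w = B' - A' := by rw [hu, hw]; abel
    rw [e1] at hne
    rw [e2]
    calc ‖B' - A'‖ ≤ ‖η • (g - d)‖ := hne
      _ = η * ‖g - d‖ := by rw [norm_smul, Real.norm_eq_abs, abs_of_pos hη]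
  have h4 : ⟪g - d, u⟫ ≤ ⟪g - d, w⟫ + η * ‖g - d‖ ^ 2 := by
    have hcs : ⟪g - d, u - w⟫ ≤ ‖g - d‖ * ‖u - w‖ := real_inner_le_norm _ _
    have h5 : ‖g - d‖ * ‖u - w‖ ≤ ‖g - d‖ * (η * ‖g - d‖) :=
      mul_le_mul_of_nonneg_left h3 (norm_nonneg _)
    rw [inner_sub_right] at hcs
    nlinarith [norm_nonneg (g - d)]
  have hgd : ⟪g, u⟫ = ⟪d, u⟫ + ⟪g - d, u⟫ := by rw [inner_sub_left]; ring
  have hnu : ‖η⁻¹ • u‖ ^ 2 = η⁻¹ ^ 2 * ‖u‖ ^ 2 := by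
    rw [norm_smul, Real.norm_eq_abs, abs_of_pos (inv_pos.2 hη)]; ring
  have hnw : ⟪g - d, η⁻¹ • w⟫ = η⁻¹ * ⟪g - d, w⟫ := real_inner_smul_right _ _ _
  rw [hnu, hnw]
  have e3 : (η - (L₂ : ℝ) * η ^ 2 / 2) * (η⁻¹ ^ 2 * ‖u‖ ^ 2)
      = η⁻¹ * ‖u‖ ^ 2 - (L₂ : ℝ) / 2 * ‖u‖ ^ 2 := by
    field_simp
  have e4 : η * (η⁻¹ * ⟪g - d, w⟫) = ⟪g - d, w⟫ := by field_simp
  rw [e3, e4]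
  have h1' : η⁻¹ * ‖u‖ ^ 2 ≤ ⟪g, u⟫ := by
    have := mul_le_mul_of_nonneg_left h1 (le_of_lt (inv_pos.2 hη))
    rw [← mul_assoc, inv_mul_cancel₀ hη.ne', one_mul] at this
    linarith
  linarith [h1', h2, h4, hgd]


/-- Lemma 3: descent bound for the zeroth-order projected stochastic gradient
iteration `a_{t+1} = P_{[0,1]}(a_t - η_t ĝ_t)` with conditionally unbiased
stochastic gradients `E[ĝ_t | ℱ_t] = ∇f_μ(a_t)`, step sizes `η_t ∈ (0, 1/L₂)`,
and rectified gradients `G_t = (a_t - a_{t+1})/η_t`: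
`∑_t (2η_t - L₂ η_t²) E[‖G_t‖²]
  ≤ 2 ∑_t η_t E[‖ĝ_t - ∇f_μ(a_t)‖²] + 2μ² L₂ + 2(E[f(a₀)] - f(a*))`. -/
theorem zeroth_order_pgd_descent_bound
    {Ω : Type*} {mΩ : MeasurableSpace Ω} (ℙ : Measure Ω) [IsProbabilityMeasure ℙ]
    (n : ℕ) (hn : 1 ≤ n)
    (f : EuclideanSpace ℝ (Fin n) → ℝ)
    (L₁ L₂ : NNReal)
    (hf : LipschitzWith L₁ f)
    (hdiff : Differentiable ℝ f)
    (hgrad : LipschitzWith L₂ (gradient f))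
    (μ : ℝ) (hμ : 0 < μ)
    (fμ : EuclideanSpace ℝ (Fin n) → ℝ)
    (hfμ : ∀ x, fμ x = ∫ v, f (x + μ • v) ∂(ballUniform n))
    (box : Set (EuclideanSpace ℝ (Fin n)))
    (hbox : box = {x | ∀ i, x i ∈ Set.Icc (0 : ℝ) 1})
    (astar : EuclideanSpace ℝ (Fin n))
    (hastar : astar ∈ box) (hmin : ∀ x ∈ box, f astar ≤ f x)
    (ℱ : Filtration ℕ mΩ) (T : ℕ)
    (η : ℕ → ℝ) (hη : ∀ t < T, η t ∈ Set.Ioo (0 : ℝ) (1 / (L₂ : ℝ)))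
    (a ghat G : ℕ → Ω → EuclideanSpace ℝ (Fin n))
    (ha0 : ∀ ω, a 0 ω ∈ box)
    (hameas : ∀ t, StronglyMeasurable[ℱ t] (a t))
    (hg2 : ∀ t < T, MemLp (ghat t) 2 ℙ)
    (hgcond : ∀ t < T, (ℙ[ghat t | ℱ t]) =ᵐ[ℙ] fun ω => gradient fμ (a t ω))
    (hrec : ∀ t < T, ∀ ω, a (t + 1) ω = clamp01 n (a t ω - η t • ghat t ω))
    (hG : ∀ t < T, ∀ ω, G t ω = (η t)⁻¹ • (a t ω - a (t + 1) ω)) :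
    ∑ t ∈ Finset.range T, (2 * η t - (L₂ : ℝ) * η t ^ 2) * (∫ ω, ‖G t ω‖ ^ 2 ∂ℙ) ≤
      2 * ∑ t ∈ Finset.range T, η t * (∫ ω, ‖ghat t ω - gradient fμ (a t ω)‖ ^ 2 ∂ℙ)
        + 2 * μ ^ 2 * (L₂ : ℝ) + 2 * ((∫ ω, f (a 0 ω) ∂ℙ) - f astar) := by
  haveI hPB := ballUniform_isProb hn
  subst hbox
  have hfμ_eq : fμ = fun x => ∫ v, f (x + μ • v) ∂(ballUniform n) := funext hfμ
  have hfμdiff : Differentiable ℝ fμ := by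
    rw [hfμ_eq]
    intro x
    exact (smoothing_hasGradient hn hf hdiff hgrad hμ x).differentiableAt
  have hfμgradlip : LipschitzWith L₂ (gradient fμ) := by
    rw [hfμ_eq]; exact smoothing_grad_lip hn hf hdiff hgrad hμ
  have hfμlip : LipschitzWith L₁ fμ := by
    rw [hfμ_eq]; exact smoothing_lip hn hf hμ
  have hbias : ∀ x, |fμ x - f x| ≤ (L₂ : ℝ) / 2 * μ ^ 2 := by
    intro x; rw [hfμ x]; exact smoothing_bias hn hf hdiff hgrad hμ x
  have hgradb : ∀ x, ‖gradient fμ x‖ ≤ (L₁ : ℝ) := fun x =>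
    gradient_norm_le_of_lipschitz hfμlip x
  have hdescent : ∀ x y, fμ y ≤ fμ x + ⟪gradient fμ x, y - x⟫ + (L₂:ℝ)/2 * ‖y - x‖ ^ 2 := by
    intro x y
    have h := (abs_le.mp (descent_abs hfμdiff hfμgradlip x y)).2
    linarith
  have habox : ∀ t, t ≤ T → ∀ ω i, a t ω i ∈ Set.Icc (0:ℝ) 1 := by
    intro t
    induction t with
    | zero => intro _ ω i; exact ha0 ω i
    | succ s ih => intro hs ω i; rw [hrec s (by omega) ω]; exact clamp01_mem _ i
  have hsm : ∀ t, AEStronglyMeasurable (a t) ℙ := fun t =>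
    ((hameas t).mono (ℱ.le t)).aestronglyMeasurable
  have hfμc : Continuous fμ := hfμlip.continuous
  have hgfc : Continuous (gradient fμ) := hfμgradlip.continuous
  have hIfμ : ∀ t, t ≤ T → Integrable (fun ω => fμ (a t ω)) ℙ := by
    intro t htT
    apply Integrable.mono' (integrable_const (|fμ 0| + (L₁:ℝ) * Real.sqrt n))
    · exact hfμc.comp_aestronglyMeasurable (hsm t)
    · filter_upwards with ω
      have h1 := hfμlip.dist_le_mul (a t ω) 0
      rw [Real.dist_eq, dist_zero_right] at h1
      have h2 := box_norm_le (habox t htT ω)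
      have h3 := abs_sub_abs_le_abs_sub (fμ (a t ω)) (fμ 0)
      rw [Real.norm_eq_abs]
      have h4 : (L₁:ℝ) * ‖a t ω‖ ≤ (L₁:ℝ) * Real.sqrt n :=
        mul_le_mul_of_nonneg_left h2 (NNReal.coe_nonneg L₁)
      linarith
  have hIf0 : Integrable (fun ω => f (a 0 ω)) ℙ := by
    apply Integrable.mono' (integrable_const (|f 0| + (L₁:ℝ) * Real.sqrt n))
    · exact hf.continuous.comp_aestronglyMeasurable (hsm 0)
    · filter_upwards with ω
      have h1 := hf.dist_le_mul (a 0 ω) 0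
      rw [Real.dist_eq, dist_zero_right] at h1
      have h2 := box_norm_le (habox 0 (Nat.zero_le T) ω)
      have h3 := abs_sub_abs_le_abs_sub (f (a 0 ω)) (f 0)
      rw [Real.norm_eq_abs]
      have h4 : (L₁:ℝ) * ‖a 0 ω‖ ≤ (L₁:ℝ) * Real.sqrt n :=
        mul_le_mul_of_nonneg_left h2 (NNReal.coe_nonneg L₁)
      linarith
  -- per-step inequality in expectation
  have step : ∀ t, t < T →
      (η t - (L₂:ℝ) * η t ^ 2 / 2) * (∫ ω, ‖G t ω‖ ^ 2 ∂ℙ)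
        ≤ (∫ ω, fμ (a t ω) ∂ℙ) - (∫ ω, fμ (a (t+1) ω) ∂ℙ)
          + η t * (∫ ω, ‖ghat t ω - gradient fμ (a t ω)‖ ^ 2 ∂ℙ) := by
    intro t ht
    obtain ⟨hη0, -⟩ := hη t ht
    set Gtil : Ω → EuclideanSpace ℝ (Fin n) := fun ω =>
      (η t)⁻¹ • (a t ω - clamp01 n (a t ω - η t • gradient fμ (a t ω))) with hGtil
    have hΦc : Continuous (fun z : EuclideanSpace ℝ (Fin n) =>
        (η t)⁻¹ • (z - clamp01 n (z - η t • gradient fμ z))) := by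
      exact (continuous_id.sub (clamp01_lipschitz.continuous.comp
        (continuous_id.sub (hgfc.const_smul (η t))))).const_smul (η t)⁻¹
    have hGtilF : StronglyMeasurable[ℱ t] Gtil := hΦc.comp_stronglyMeasurable (hameas t)
    have hGtilaes : AEStronglyMeasurable Gtil ℙ :=
      ((hGtilF.mono (ℱ.le t)).aestronglyMeasurable)
    have hGtilb : ∀ ω, ‖Gtil ω‖ ≤ (L₁:ℝ) := by
      intro ω
      have hfix : clamp01 n (a t ω) = a t ω := clamp01_eq_self (habox t (le_of_lt ht) ω)
      have hne := clamp01_nonexpansive (a t ω) (a t ω - η t • gradient fμ (a t ω))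
      rw [hfix, sub_sub_cancel] at hne
      have e1 : ‖Gtil ω‖ = (η t)⁻¹ * ‖a t ω - clamp01 n (a t ω - η t • gradient fμ (a t ω))‖ := by
        rw [hGtil, norm_smul, Real.norm_eq_abs, abs_of_pos (inv_pos.2 hη0)]
      rw [e1]
      have e2 : ‖η t • gradient fμ (a t ω)‖ = η t * ‖gradient fμ (a t ω)‖ := by
        rw [norm_smul, Real.norm_eq_abs, abs_of_pos hη0]
      rw [e2] at hne
      calc (η t)⁻¹ * ‖a t ω - clamp01 n (a t ω - η t • gradient fμ (a t ω))‖
          ≤ (η t)⁻¹ * (η t * ‖gradient fμ (a t ω)‖) := by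
            apply mul_le_mul_of_nonneg_left hne (le_of_lt (inv_pos.2 hη0))
        _ = ‖gradient fμ (a t ω)‖ := by field_simp
        _ ≤ (L₁:ℝ) := hgradb _
    have hgaes : AEStronglyMeasurable (ghat t) ℙ := (hg2 t ht).aestronglyMeasurable
    have hgint : Integrable (ghat t) ℙ := (hg2 t ht).integrable one_le_two
    have hgradmem : MemLp (fun ω => gradient fμ (a t ω)) 2 ℙ :=
      (memLp_top_of_bound (hgfc.comp_aestronglyMeasurable (hsm t)) (L₁:ℝ)
        (Filter.Eventually.of_forall fun ω => hgradb _)).mono_exponent le_top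
    have hδ2 : MemLp (fun ω => ghat t ω - gradient fμ (a t ω)) 2 ℙ := (hg2 t ht).sub hgradmem
    have hδint : Integrable (fun ω => ghat t ω - gradient fμ (a t ω)) ℙ :=
      hδ2.integrable one_le_two
    have hδsq : Integrable (fun ω => ‖ghat t ω - gradient fμ (a t ω)‖ ^ 2) ℙ :=
      hδ2.norm.integrable_sq
    have hGfun : G t = fun ω => (η t)⁻¹ • (a t ω - clamp01 n (a t ω - η t • ghat t ω)) :=
      funext fun ω => by rw [hG t ht ω, hrec t ht ω]
    have hGaes : AEStronglyMeasurable (G t) ℙ := by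
      rw [hGfun]
      have hx : AEStronglyMeasurable (fun ω => a t ω - clamp01 n (a t ω - η t • ghat t ω)) ℙ :=
        (hsm t).sub (clamp01_lipschitz.continuous.comp_aestronglyMeasurable
        ((hsm t).sub (hgaes.const_smul (η t))))
      exact hx.const_smul (η t)⁻¹
    have hGb : ∀ ω, ‖G t ω‖ ≤ ‖ghat t ω‖ := by
      intro ω
      have hfix : clamp01 n (a t ω) = a t ω := clamp01_eq_self (habox t (le_of_lt ht) ω)
      have hne := clamp01_nonexpansive (a t ω) (a t ω - η t • ghat t ω)
      rw [hfix, sub_sub_cancel] at hne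
      have e2 : ‖η t • ghat t ω‖ = η t * ‖ghat t ω‖ := by
        rw [norm_smul, Real.norm_eq_abs, abs_of_pos hη0]
      rw [e2] at hne
      rw [hG t ht ω, hrec t ht ω, norm_smul, Real.norm_eq_abs, abs_of_pos (inv_pos.2 hη0)]
      calc (η t)⁻¹ * ‖a t ω - clamp01 n (a t ω - η t • ghat t ω)‖
          ≤ (η t)⁻¹ * (η t * ‖ghat t ω‖) :=
            mul_le_mul_of_nonneg_left hne (le_of_lt (inv_pos.2 hη0))
        _ = ‖ghat t ω‖ := by field_simp
    have hG2 : MemLp (G t) 2 ℙ :=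
      (hg2 t ht).of_le hGaes (Filter.Eventually.of_forall fun ω => hGb ω)
    have hGsq : Integrable (fun ω => ‖G t ω‖ ^ 2) ℙ := hG2.norm.integrable_sq
    have hinneraes : AEStronglyMeasurable
        (fun ω => ⟪ghat t ω - gradient fμ (a t ω), Gtil ω⟫) ℙ :=
      hδ2.aestronglyMeasurable.inner hGtilaes
    have hinnerint : Integrable
        (fun ω => ⟪ghat t ω - gradient fμ (a t ω), Gtil ω⟫) ℙ := by
      apply Integrable.mono' (hδint.norm.const_mul (L₁:ℝ))
      · exact hinneraes
      · filter_upwards with ω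
        calc ‖⟪ghat t ω - gradient fμ (a t ω), Gtil ω⟫‖
            ≤ ‖ghat t ω - gradient fμ (a t ω)‖ * ‖Gtil ω‖ := norm_inner_le_norm _ _
          _ ≤ ‖ghat t ω - gradient fμ (a t ω)‖ * (L₁:ℝ) :=
              mul_le_mul_of_nonneg_left (hGtilb ω) (norm_nonneg _)
          _ = (L₁:ℝ) * ‖ghat t ω - gradient fμ (a t ω)‖ := mul_comm _ _
    -- zero expectation of the cross term
    have hzero : (∫ ω, ⟪ghat t ω - gradient fμ (a t ω), Gtil ω⟫ ∂ℙ) = 0 := by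
      have hYaes : ∀ i : Fin n, AEStronglyMeasurable (fun ω => Gtil ω i) ℙ :=
        fun i => (EuclideanSpace.proj (𝕜:=ℝ) i).continuous.comp_aestronglyMeasurable hGtilaes
      have hXaes : ∀ i : Fin n, AEStronglyMeasurable (fun ω => ghat t ω i) ℙ :=
        fun i => (EuclideanSpace.proj (𝕜:=ℝ) i).continuous.comp_aestronglyMeasurable hgaes
      have hDaes : ∀ i : Fin n, AEStronglyMeasurable (fun ω => gradient fμ (a t ω) i) ℙ :=
        fun i => (EuclideanSpace.proj (𝕜:=ℝ) i).continuous.comp_aestronglyMeasurable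
          (hgfc.comp_aestronglyMeasurable (hsm t))
      have hYb : ∀ i (ω : Ω), |Gtil ω i| ≤ (L₁:ℝ) :=
        fun i ω => (euclidean_abs_coord_le_norm _ i).trans (hGtilb ω)
      have hcoordint : ∀ i : Fin n, Integrable
          (fun ω => (ghat t ω i - gradient fμ (a t ω) i) * Gtil ω i) ℙ := by
        intro i
        apply Integrable.mono' (hδint.norm.const_mul (L₁:ℝ))
        · exact ((hXaes i).sub (hDaes i)).mul (hYaes i)
        · filter_upwards with ω
          rw [Real.norm_eq_abs, abs_mul]
          have h1 : |ghat t ω i - gradient fμ (a t ω) i|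
              ≤ ‖ghat t ω - gradient fμ (a t ω)‖ := by
            have := euclidean_abs_coord_le_norm (ghat t ω - gradient fμ (a t ω)) i
            simpa [PiLp.sub_apply] using this
          calc |ghat t ω i - gradient fμ (a t ω) i| * |Gtil ω i|
              ≤ ‖ghat t ω - gradient fμ (a t ω)‖ * (L₁:ℝ) :=
                mul_le_mul h1 (hYb i ω) (abs_nonneg _) (norm_nonneg _)
            _ = (L₁:ℝ) * ‖ghat t ω - gradient fμ (a t ω)‖ := mul_comm _ _
      have hcoord : ∀ i : Fin n,
          (∫ ω, (ghat t ω i - gradient fμ (a t ω) i) * Gtil ω i ∂ℙ) = 0 := by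
        intro i
        have hYiF : StronglyMeasurable[ℱ t] (fun ω => Gtil ω i) :=
          (EuclideanSpace.proj (𝕜:=ℝ) i).continuous.comp_stronglyMeasurable hGtilF
        have hXi : Integrable (fun ω => ghat t ω i) ℙ :=
          (EuclideanSpace.proj (𝕜:=ℝ) i).integrable_comp hgint
        have hcondi : (ℙ[fun ω => ghat t ω i|ℱ t]) =ᵐ[ℙ]
            fun ω => gradient fμ (a t ω) i := by
          have h1 := condexp_clm_comm (ℱ.le t) (EuclideanSpace.proj (𝕜:=ℝ) i) hgint
          refine h1.trans ?_
          filter_upwards [hgcond t ht] with ω hω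
          rw [hω]
          rfl
        have hIYg : Integrable (fun ω => Gtil ω i * ghat t ω i) ℙ := by
          apply Integrable.mono' ((hXi.norm.const_mul (L₁:ℝ)))
          · exact (hYaes i).mul (hXaes i)
          · filter_upwards with ω
            rw [Real.norm_eq_abs, abs_mul, Real.norm_eq_abs]
            exact mul_le_mul_of_nonneg_right (hYb i ω) (abs_nonneg _)
        have hIYD : Integrable (fun ω => Gtil ω i * gradient fμ (a t ω) i) ℙ := by
          apply Integrable.mono' (integrable_const ((L₁:ℝ) * (L₁:ℝ)))
          · exact (hYaes i).mul (hDaes i)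
          · filter_upwards with ω
            rw [Real.norm_eq_abs, abs_mul]
            have hD : |gradient fμ (a t ω) i| ≤ (L₁:ℝ) :=
              (euclidean_abs_coord_le_norm _ i).trans (hgradb _)
            exact mul_le_mul (hYb i ω) hD (abs_nonneg _) (NNReal.coe_nonneg L₁)
        have hmul := condExp_mul_of_stronglyMeasurable_left hYiF hIYg hXi
        have e1 : (∫ ω, Gtil ω i * ghat t ω i ∂ℙ)
            = ∫ ω, Gtil ω i * gradient fμ (a t ω) i ∂ℙ := by
          rw [← integral_condExp (ℱ.le t) (f := fun ω => Gtil ω i * ghat t ω i)]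
          apply integral_congr_ae
          refine hmul.trans ?_
          filter_upwards [hcondi] with ω hω
          simp only [Pi.mul_apply]
          rw [hω]
        have e2 : (fun ω => (ghat t ω i - gradient fμ (a t ω) i) * Gtil ω i)
            = fun ω => Gtil ω i * ghat t ω i - Gtil ω i * gradient fμ (a t ω) i :=
          funext fun ω => by ring
        rw [e2, integral_sub hIYg hIYD, e1, sub_self]
      have hexp : (fun ω => ⟪ghat t ω - gradient fμ (a t ω), Gtil ω⟫)
          = fun ω => ∑ i, (ghat t ω i - gradient fμ (a t ω) i) * Gtil ω i := by
        funext ω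
        rw [PiLp.inner_apply]
        apply Finset.sum_congr rfl
        intro i _
        simp [PiLp.sub_apply]
        ring
      rw [hexp, integral_finset_sum _ (fun i _ => hcoordint i)]
      exact Finset.sum_eq_zero fun i _ => hcoord i
    -- pointwise inequality
    have hpt : ∀ ω, (η t - (L₂:ℝ) * η t ^ 2 / 2) * ‖G t ω‖ ^ 2
        ≤ fμ (a t ω) - fμ (a (t+1) ω)
          + η t * ⟪ghat t ω - gradient fμ (a t ω), Gtil ω⟫
          + η t * ‖ghat t ω - gradient fμ (a t ω)‖ ^ 2 := by
      intro ω
      have hps := pointwise_step fμ L₂ hdescent (η t) hη0 (a t ω) (ghat t ω)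
        (habox t (le_of_lt ht) ω)
      rw [hG t ht ω, hrec t ht ω]
      exact hps
    -- integrate
    have hIrhs : Integrable (fun ω => fμ (a t ω) - fμ (a (t+1) ω)
        + η t * ⟪ghat t ω - gradient fμ (a t ω), Gtil ω⟫
        + η t * ‖ghat t ω - gradient fμ (a t ω)‖ ^ 2) ℙ :=
      (((hIfμ t (le_of_lt ht)).sub (hIfμ (t+1) ht)).add
        (hinnerint.const_mul (η t))).add (hδsq.const_mul (η t))
    have i1 : Integrable (fun ω => fμ (a t ω) - fμ (a (t + 1) ω)) ℙ :=
      (hIfμ t (le_of_lt ht)).sub (hIfμ (t+1) ht)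
    have i2 : Integrable (fun ω =>
        η t * ⟪ghat t ω - gradient fμ (a t ω), Gtil ω⟫) ℙ := hinnerint.const_mul (η t)
    have i3 : Integrable (fun ω =>
        η t * ‖ghat t ω - gradient fμ (a t ω)‖ ^ 2) ℙ := hδsq.const_mul (η t)
    have i12 : Integrable (fun ω => fμ (a t ω) - fμ (a (t + 1) ω)
        + η t * ⟪ghat t ω - gradient fμ (a t ω), Gtil ω⟫) ℙ := i1.add i2
    have hmono := integral_mono (hGsq.const_mul _) hIrhs hpt
    rw [integral_const_mul] at hmono
    rw [integral_add i12 i3, integral_add i1 i2,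
      integral_sub (hIfμ t (le_of_lt ht)) (hIfμ (t+1) ht),
      integral_const_mul, integral_const_mul, hzero] at hmono
    simpa using hmono
  -- sum over t and telescope
  have hsum : ∑ t ∈ Finset.range T, (2 * η t - (L₂:ℝ) * η t ^ 2) * (∫ ω, ‖G t ω‖ ^ 2 ∂ℙ)
      ≤ 2 * ((∫ ω, fμ (a 0 ω) ∂ℙ) - (∫ ω, fμ (a T ω) ∂ℙ))
        + 2 * ∑ t ∈ Finset.range T, η t * (∫ ω, ‖ghat t ω - gradient fμ (a t ω)‖ ^ 2 ∂ℙ) := by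
    have h1 : ∀ t ∈ Finset.range T,
        (2 * η t - (L₂:ℝ) * η t ^ 2) * (∫ ω, ‖G t ω‖ ^ 2 ∂ℙ)
          ≤ (2 * ((∫ ω, fμ (a t ω) ∂ℙ) - (∫ ω, fμ (a (t+1) ω) ∂ℙ))
            + 2 * (η t * (∫ ω, ‖ghat t ω - gradient fμ (a t ω)‖ ^ 2 ∂ℙ))) := by
      intro t ht'
      have hst := step t (Finset.mem_range.1 ht')
      have e : (2 * η t - (L₂:ℝ) * η t ^ 2) * (∫ ω, ‖G t ω‖ ^ 2 ∂ℙ)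
          = 2 * ((η t - (L₂:ℝ) * η t ^ 2 / 2) * (∫ ω, ‖G t ω‖ ^ 2 ∂ℙ)) := by ring
      rw [e]
      linarith
    calc ∑ t ∈ Finset.range T, (2 * η t - (L₂:ℝ) * η t ^ 2) * (∫ ω, ‖G t ω‖ ^ 2 ∂ℙ)
        ≤ ∑ t ∈ Finset.range T, (2 * ((∫ ω, fμ (a t ω) ∂ℙ) - (∫ ω, fμ (a (t+1) ω) ∂ℙ))
            + 2 * (η t * (∫ ω, ‖ghat t ω - gradient fμ (a t ω)‖ ^ 2 ∂ℙ))) :=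
          Finset.sum_le_sum h1
      _ = 2 * ((∫ ω, fμ (a 0 ω) ∂ℙ) - (∫ ω, fμ (a T ω) ∂ℙ))
          + 2 * ∑ t ∈ Finset.range T,
            η t * (∫ ω, ‖ghat t ω - gradient fμ (a t ω)‖ ^ 2 ∂ℙ) := by
          rw [Finset.sum_add_distrib, ← Finset.mul_sum, ← Finset.mul_sum,
            Finset.sum_range_sub' (fun t => ∫ ω, fμ (a t ω) ∂ℙ)]
  -- endpoint bounds
  have hA0 : (∫ ω, fμ (a 0 ω) ∂ℙ) ≤ (∫ ω, f (a 0 ω) ∂ℙ) + (L₂:ℝ)/2 * μ ^ 2 := by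
    have hle : (∫ ω, fμ (a 0 ω) ∂ℙ) ≤ ∫ ω, (f (a 0 ω) + (L₂:ℝ)/2 * μ ^ 2) ∂ℙ := by
      apply integral_mono (hIfμ 0 (Nat.zero_le T)) (hIf0.add (integrable_const _))
      intro ω
      have hb := (abs_le.mp (hbias (a 0 ω))).2
      show fμ (a 0 ω) ≤ f (a 0 ω) + (L₂:ℝ)/2 * μ ^ 2
      linarith
    rw [integral_add hIf0 (integrable_const _), integral_const] at hle
    simpa using hle
  have hAT : f astar - (L₂:ℝ)/2 * μ ^ 2 ≤ ∫ ω, fμ (a T ω) ∂ℙ := by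
    have hp : ∀ ω, f astar - (L₂:ℝ)/2 * μ ^ 2 ≤ fμ (a T ω) := by
      intro ω
      have h1 := hmin (a T ω) (fun i => habox T le_rfl ω i)
      have h2 := (abs_le.mp (hbias (a T ω))).1
      linarith
    have hle : (∫ _ω, (f astar - (L₂:ℝ)/2 * μ ^ 2) ∂ℙ) ≤ ∫ ω, fμ (a T ω) ∂ℙ :=
      integral_mono (integrable_const _) (hIfμ T le_rfl) hp
    rw [integral_const] at hle
    simpa using hle
  linarith
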